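/- Let (ξ,η) be a bivariate Lévy process, W the Lévy process with e^{-ξ_t} = ε(W)_t, and V the GOU process with V_0 = z. Then for every u ∈ ℝ and t ≥ 0, V_t = u + e^{ξ_t}(z - u + ∫_0^t e^{-ξ_{s-}} d(η_s - uW_s)). In particular, if η - uW is a subordinator and z ≥ u, then V_t ≥ u for all t ≥ 0. -/

import Mathlib

open MeasureTheory ProbabilityTheory Filter Topology Set
open scoped NNReal ENNReal

section Prelim
variable {Ω : Type*} [MeasurableSpace Ω]

/-- Independent increments for a real-time process. -/
def HasIndepIncrements {E : Type*} [MeasurableSpace E] [Sub E]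
    (μ : Measure Ω) (X : ℝ → Ω → E) : Prop :=
  ∀ (n : ℕ) (t : Fin (n + 1) → ℝ), Monotone t →
    iIndepFun
      (fun i : Fin n => fun ω => X (t i.succ) ω - X (t i.castSucc) ω) μ

/-- Stationary increments. -/
def HasStatIncrements {E : Type*} [MeasurableSpace E] [Sub E]
    (μ : Measure Ω) (X : ℝ → Ω → E) : Prop :=
  ∀ s t : ℝ, 0 ≤ s → 0 ≤ t →
    Measure.map (fun ω => X (s + t) ω - X s ω) μ = Measure.map (X t) μ

/-- A càdlàg path on `[0,∞)`. -/
def CadlagOn {E : Type*} [TopologicalSpace E] (f : ℝ → E) : Prop :=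
  (∀ t ≥ (0:ℝ), ContinuousWithinAt f (Set.Ici t) t) ∧
    ∀ t > (0:ℝ), ∃ l, Tendsto f (nhdsWithin t (Set.Iio t)) (nhds l)

/-- A Lévy process with values in `E`. -/
def IsLevyProcess {E : Type*} [MeasurableSpace E] [TopologicalSpace E] [SubtractionMonoid E]
    (μ : Measure Ω) (X : ℝ → Ω → E) : Prop :=
  IsProbabilityMeasure μ ∧ (∀ ω, X 0 ω = 0) ∧ (∀ t, Measurable (X t)) ∧
    HasIndepIncrements μ X ∧ HasStatIncrements μ X ∧
    ∀ᵐ ω ∂μ, CadlagOn fun t => X t ω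

/-- A subordinator: a real Lévy process with nondecreasing paths. -/
def IsSubordinator (μ : Measure Ω) (X : ℝ → Ω → ℝ) : Prop :=
  IsLevyProcess μ X ∧ ∀ᵐ ω ∂μ, MonotoneOn (fun t => X t ω) (Set.Ici (0:ℝ))

/-- Left-endpoint Riemann sum of `H` against `X` along the partition `t`. -/
def riemannSum {n : ℕ} (t : Fin (n + 1) → ℝ) (H X : ℝ → Ω → ℝ) (ω : Ω) : ℝ :=
  ∑ i : Fin n, H (t i.castSucc) ω * (X (t i.succ) ω - X (t i.castSucc) ω)

/-- `Z = ∫_0^T H_{s-} dX_s` in the semimartingale sense: the left-endpoint Riemann sums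
converge to `Z` in probability as the mesh of the partition of `[0,T]` tends to `0`. -/
def IsStochInt (μ : Measure Ω) (H X : ℝ → Ω → ℝ) (T : ℝ) (Z : Ω → ℝ) : Prop :=
  ∀ ε > (0:ℝ), ∀ δ > (0:ℝ), ∃ m > (0:ℝ), ∀ (n : ℕ) (t : Fin (n + 1) → ℝ),
    Monotone t → t 0 = 0 → t (Fin.last n) = T →
    (∀ i : Fin n, t i.succ - t i.castSucc < m) →
    μ {ω | δ ≤ |riemannSum t H X ω - Z ω|} < ENNReal.ofReal ε

/-- `Q = [X,X]_T`: sums of squared increments converge to `Q` in probability. -/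
def IsQuadVar (μ : Measure Ω) (X : ℝ → Ω → ℝ) (T : ℝ) (Q : Ω → ℝ) : Prop :=
  ∀ ε > (0:ℝ), ∀ δ > (0:ℝ), ∃ m > (0:ℝ), ∀ (n : ℕ) (t : Fin (n + 1) → ℝ),
    Monotone t → t 0 = 0 → t (Fin.last n) = T →
    (∀ i : Fin n, t i.succ - t i.castSucc < m) →
    μ {ω | δ ≤ |(∑ i : Fin n, (X (t i.succ) ω - X (t i.castSucc) ω) ^ 2) - Q ω|} < ENNReal.ofReal ε

/-- The jump of a path at time `t`. -/
noncomputable def jump (f : ℝ → ℝ) (t : ℝ) : ℝ := f t - Function.leftLim f t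

/-- `(γ, σ², Π)` is the characteristic (Lévy–Khintchine) triplet of the real Lévy
process `X`, expressed through its characteristic function. -/
def IsLevyTriplet (μ : Measure Ω) (X : ℝ → Ω → ℝ) (γ σ2 : ℝ) (ν : Measure ℝ) : Prop :=
  ∀ (u t : ℝ), 0 ≤ t →
    ∫ ω, Complex.exp (Complex.I * u * X t ω) ∂μ =
      Complex.exp (t * (Complex.I * γ * u - σ2 * u ^ 2 / 2 +
        ∫ x, (Complex.exp (Complex.I * u * x) - 1 -
          Complex.I * u * x * Set.indicator {y : ℝ | |y| < 1} (fun _ => (1:ℂ)) x) ∂ν))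

/-- A Poisson process with rate `r`. -/
def IsPoissonProcess (μ : Measure Ω) (r : ℝ≥0) (N : ℝ → Ω → ℕ) : Prop :=
  IsProbabilityMeasure μ ∧ (∀ ω, N 0 ω = 0) ∧ (∀ t, Measurable (N t)) ∧
    (∀ᵐ ω ∂μ, MonotoneOn (fun t => N t ω) (Set.Ici (0:ℝ))) ∧
    (∀ (n : ℕ) (t : Fin (n + 1) → ℝ), Monotone t →
      iIndepFun
        (fun i : Fin n => fun ω => N (t i.succ) ω - N (t i.castSucc) ω) μ) ∧
    ∀ s t : ℝ, 0 ≤ s → s ≤ t →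
      Measure.map (fun ω => N t ω - N s ω) μ = poissonMeasure (r * Real.toNNReal (t - s))

/-- A standard Brownian motion. -/
def IsBrownianMotion (μ : Measure Ω) (B : ℝ → Ω → ℝ) : Prop :=
  IsProbabilityMeasure μ ∧ (∀ ω, B 0 ω = 0) ∧ (∀ t, Measurable (B t)) ∧
    HasIndepIncrements μ B ∧
    (∀ s t : ℝ, 0 ≤ s → s ≤ t →
      Measure.map (fun ω => B t ω - B s ω) μ = gaussianReal 0 (Real.toNNReal (t - s))) ∧
    ∀ᵐ ω ∂μ, Continuous fun t => B t ω

end Prelim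

section Aux
variable {Ω : Type*} [MeasurableSpace Ω]

/-- Existence of a partition of `[0,T]` with mesh `< m`. -/
lemma exists_partition (T m : ℝ) (hT : 0 ≤ T) (hm : 0 < m) :
    ∃ (n : ℕ) (t : Fin (n + 1) → ℝ), Monotone t ∧ t 0 = 0 ∧ t (Fin.last n) = T ∧
      ∀ i : Fin n, t i.succ - t i.castSucc < m := by
  rcases eq_or_lt_of_le hT with h | h
  · exact ⟨0, fun _ => 0, monotone_const, rfl, h, fun i => i.elim0⟩
  · obtain ⟨n, hn⟩ := exists_nat_gt (T / m)
    have hn0 : 0 < (n : ℝ) := lt_trans (div_pos h hm) hn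
    refine ⟨n, fun i => T * i / n, ?_, ?_, ?_, ?_⟩
    · intro i j hij
      have hij' : (i : ℝ) ≤ (j : ℝ) := by exact_mod_cast hij
      have : T * (i : ℝ) ≤ T * j := by nlinarith
      exact div_le_div_of_nonneg_right this hn0.le
    · simp
    · simp only [Fin.val_last]
      field_simp
    · intro i
      have : T * ((i : ℝ) + 1) / n - T * i / n = T / n := by field_simp; ring
      simp only [Fin.val_succ, Fin.coe_castSucc, Nat.cast_add, Nat.cast_one]
      rw [this]
      rw [div_lt_iff₀ hn0]
      nlinarith [(div_lt_iff₀ hm).mp hn]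

lemma riemannSum_sub_smul {n : ℕ} (t : Fin (n + 1) → ℝ) (H X1 X2 : ℝ → Ω → ℝ) (u : ℝ) (ω : Ω) :
    riemannSum t H (fun r ω => X1 r ω - u * X2 r ω) ω
      = riemannSum t H X1 ω - u * riemannSum t H X2 ω := by
  simp only [riemannSum, Finset.mul_sum, ← Finset.sum_sub_distrib]
  exact Finset.sum_congr rfl fun i _ => by ring

/-- Linearity of stochastic integrals. -/
lemma isStochInt_sub_smul {μ : Measure Ω} {H X1 X2 : ℝ → Ω → ℝ} {T : ℝ} {Z1 Z2 : Ω → ℝ}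
    (h1 : IsStochInt μ H X1 T Z1) (h2 : IsStochInt μ H X2 T Z2) (u : ℝ) :
    IsStochInt μ H (fun r ω => X1 r ω - u * X2 r ω) T (fun ω => Z1 ω - u * Z2 ω) := by
  intro ε hε δ hδ
  have hu : (0:ℝ) < |u| + 1 := by positivity
  obtain ⟨m1, hm1, hH1⟩ := h1 (ε / 2) (by positivity) (δ / 2) (by positivity)
  obtain ⟨m2, hm2, hH2⟩ := h2 (ε / 2) (by positivity) (δ / (2 * (|u| + 1))) (by positivity)
  refine ⟨min m1 m2, lt_min hm1 hm2, fun n t ht ht0 htl htm => ?_⟩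
  have htm1 : ∀ i : Fin n, t i.succ - t i.castSucc < m1 :=
    fun i => (htm i).trans_le (min_le_left _ _)
  have htm2 : ∀ i : Fin n, t i.succ - t i.castSucc < m2 :=
    fun i => (htm i).trans_le (min_le_right _ _)
  have hsub : {ω | δ ≤ |riemannSum t H (fun r ω => X1 r ω - u * X2 r ω) ω - (Z1 ω - u * Z2 ω)|}
      ⊆ {ω | δ / 2 ≤ |riemannSum t H X1 ω - Z1 ω|}
        ∪ {ω | δ / (2 * (|u| + 1)) ≤ |riemannSum t H X2 ω - Z2 ω|} := by
    intro ω hω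
    by_contra hc
    rw [Set.mem_union] at hc
    push_neg at hc
    obtain ⟨hc1, hc2⟩ := hc
    simp only [Set.mem_setOf_eq] at hω hc1 hc2
    rw [riemannSum_sub_smul] at hω
    have key : |riemannSum t H X1 ω - u * riemannSum t H X2 ω - (Z1 ω - u * Z2 ω)|
        ≤ |riemannSum t H X1 ω - Z1 ω| + |u| * |riemannSum t H X2 ω - Z2 ω| := by
      have : riemannSum t H X1 ω - u * riemannSum t H X2 ω - (Z1 ω - u * Z2 ω)
          = (riemannSum t H X1 ω - Z1 ω) + (-u) * (riemannSum t H X2 ω - Z2 ω) := by ring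
      rw [this]
      calc _ ≤ |riemannSum t H X1 ω - Z1 ω| + |(-u) * (riemannSum t H X2 ω - Z2 ω)| :=
            abs_add_le _ _
        _ = _ := by rw [abs_mul, abs_neg]
    have hub : |u| * |riemannSum t H X2 ω - Z2 ω| ≤ (|u| + 1) * |riemannSum t H X2 ω - Z2 ω| := by
      nlinarith [abs_nonneg (riemannSum t H X2 ω - Z2 ω)]
    have : (|u| + 1) * |riemannSum t H X2 ω - Z2 ω| < (|u| + 1) * (δ / (2 * (|u| + 1))) := by
      exact mul_lt_mul_of_pos_left (not_le.mp hc2) hu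
    have heq : (|u| + 1) * (δ / (2 * (|u| + 1))) = δ / 2 := by field_simp
    linarith [hω, key]
  calc μ _ ≤ μ ({ω | δ / 2 ≤ |riemannSum t H X1 ω - Z1 ω|}
        ∪ {ω | δ / (2 * (|u| + 1)) ≤ |riemannSum t H X2 ω - Z2 ω|}) := measure_mono hsub
    _ ≤ μ {ω | δ / 2 ≤ |riemannSum t H X1 ω - Z1 ω|}
        + μ {ω | δ / (2 * (|u| + 1)) ≤ |riemannSum t H X2 ω - Z2 ω|} := measure_union_le _ _
    _ < ENNReal.ofReal (ε / 2) + ENNReal.ofReal (ε / 2) := by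
        exact ENNReal.add_lt_add (hH1 n t ht ht0 htl htm1) (hH2 n t ht ht0 htl htm2)
    _ = ENNReal.ofReal ε := by
        rw [← ENNReal.ofReal_add (by positivity) (by positivity)]; ring_nf

/-- Uniqueness (a.e.) of the stochastic integral. -/
lemma isStochInt_ae_eq {μ : Measure Ω} {H X : ℝ → Ω → ℝ} {T : ℝ} {Z1 Z2 : Ω → ℝ}
    (hT : 0 ≤ T) (h1 : IsStochInt μ H X T Z1) (h2 : IsStochInt μ H X T Z2) :
    ∀ᵐ ω ∂μ, Z1 ω = Z2 ω := by
  have key : ∀ δ > (0:ℝ), μ {ω | δ ≤ |Z1 ω - Z2 ω|} = 0 := by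
    intro δ hδ
    refine le_antisymm ?_ (zero_le)
    refine ENNReal.le_of_forall_pos_le_add fun ε hε _ => ?_
    rw [zero_add]
    have hε' : (0:ℝ) < (ε : ℝ) := hε
    obtain ⟨m1, hm1, hH1⟩ := h1 ((ε : ℝ) / 2) (by positivity) (δ / 2) (by positivity)
    obtain ⟨m2, hm2, hH2⟩ := h2 ((ε : ℝ) / 2) (by positivity) (δ / 2) (by positivity)
    obtain ⟨n, t, ht, ht0, htl, htm⟩ := exists_partition T (min m1 m2) hT (lt_min hm1 hm2)
    have htm1 : ∀ i : Fin n, t i.succ - t i.castSucc < m1 :=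
      fun i => (htm i).trans_le (min_le_left _ _)
    have htm2 : ∀ i : Fin n, t i.succ - t i.castSucc < m2 :=
      fun i => (htm i).trans_le (min_le_right _ _)
    have hsub : {ω | δ ≤ |Z1 ω - Z2 ω|}
        ⊆ {ω | δ / 2 ≤ |riemannSum t H X ω - Z1 ω|}
          ∪ {ω | δ / 2 ≤ |riemannSum t H X ω - Z2 ω|} := by
      intro ω hω
      by_contra hc
      rw [Set.mem_union] at hc
      push_neg at hc
      obtain ⟨hc1, hc2⟩ := hc
      simp only [Set.mem_setOf_eq] at hω hc1 hc2
      have : |Z1 ω - Z2 ω| ≤ |riemannSum t H X ω - Z1 ω| + |riemannSum t H X ω - Z2 ω| := by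
        have h := abs_sub (riemannSum t H X ω - Z1 ω) (riemannSum t H X ω - Z2 ω)
        calc |Z1 ω - Z2 ω| = |(riemannSum t H X ω - Z2 ω) - (riemannSum t H X ω - Z1 ω)| := by
              ring_nf
          _ ≤ |riemannSum t H X ω - Z2 ω| + |riemannSum t H X ω - Z1 ω| := abs_sub _ _
          _ = _ := by ring
      linarith
    calc μ _ ≤ _ := measure_mono hsub
      _ ≤ μ {ω | δ / 2 ≤ |riemannSum t H X ω - Z1 ω|}
          + μ {ω | δ / 2 ≤ |riemannSum t H X ω - Z2 ω|} := measure_union_le _ _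
      _ ≤ ENNReal.ofReal ((ε:ℝ) / 2) + ENNReal.ofReal ((ε:ℝ) / 2) :=
          add_le_add (hH1 n t ht ht0 htl htm1).le (hH2 n t ht ht0 htl htm2).le
      _ = ENNReal.ofReal (ε:ℝ) := by
          rw [← ENNReal.ofReal_add (by positivity) (by positivity)]; ring_nf
      _ = (ε : ENNReal) := ENNReal.ofReal_coe_nnreal
  rw [Filter.eventually_iff, mem_ae_iff]
  have hsub : {ω | Z1 ω = Z2 ω}ᶜ ⊆ ⋃ n : ℕ, {ω | 1 / (n + 1 : ℝ) ≤ |Z1 ω - Z2 ω|} := by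
    intro ω hω
    simp only [Set.mem_compl_iff, Set.mem_setOf_eq] at hω
    have hpos : 0 < |Z1 ω - Z2 ω| := abs_pos.mpr (sub_ne_zero.mpr hω)
    obtain ⟨n, hn⟩ := exists_nat_one_div_lt hpos
    exact Set.mem_iUnion.mpr ⟨n, hn.le⟩
  refine le_antisymm ?_ (zero_le)
  calc μ _ ≤ μ (⋃ n : ℕ, {ω | 1 / (n + 1 : ℝ) ≤ |Z1 ω - Z2 ω|}) := measure_mono hsub
    _ ≤ ∑' n : ℕ, μ {ω | 1 / (n + 1 : ℝ) ≤ |Z1 ω - Z2 ω|} := measure_iUnion_le _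
    _ = 0 := ENNReal.tsum_eq_zero.mpr fun n => key _ (by positivity)

/-- Nonnegativity of the stochastic integral against an a.e. nondecreasing integrator
with nonnegative integrand. -/
lemma isStochInt_nonneg {μ : Measure Ω} {H X : ℝ → Ω → ℝ} {T : ℝ} {Y : Ω → ℝ}
    (hT : 0 ≤ T) (hH : ∀ s ω, 0 ≤ H s ω)
    (hmono : ∀ᵐ ω ∂μ, MonotoneOn (fun r => X r ω) (Set.Ici (0:ℝ)))
    (h : IsStochInt μ H X T Y) : ∀ᵐ ω ∂μ, 0 ≤ Y ω := by
  rw [Filter.eventually_iff, mem_ae_iff] at hmono ⊢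
  have key : ∀ δ > (0:ℝ), μ {ω | Y ω ≤ -δ} = 0 := by
    intro δ hδ
    have hsplit : {ω | Y ω ≤ -δ}
        ⊆ ({ω | Y ω ≤ -δ} ∩ {ω | MonotoneOn (fun r => X r ω) (Set.Ici (0:ℝ))})
          ∪ {ω | MonotoneOn (fun r => X r ω) (Set.Ici (0:ℝ))}ᶜ := by
      intro ω hω
      by_cases hm : MonotoneOn (fun r => X r ω) (Set.Ici (0:ℝ))
      · exact Or.inl ⟨hω, hm⟩
      · exact Or.inr hm
    have hinter : μ ({ω | Y ω ≤ -δ} ∩ {ω | MonotoneOn (fun r => X r ω) (Set.Ici (0:ℝ))}) = 0 := by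
      refine le_antisymm ?_ (zero_le)
      refine ENNReal.le_of_forall_pos_le_add fun ε hε _ => ?_
      rw [zero_add]
      have hε' : (0:ℝ) < (ε : ℝ) := hε
      obtain ⟨m, hm, hHm⟩ := h (ε : ℝ) hε' δ hδ
      obtain ⟨n, t, ht, ht0, htl, htm⟩ := exists_partition T m hT hm
      have hsub : {ω | Y ω ≤ -δ} ∩ {ω | MonotoneOn (fun r => X r ω) (Set.Ici (0:ℝ))}
          ⊆ {ω | δ ≤ |riemannSum t H X ω - Y ω|} := by
        rintro ω ⟨hω1, hω2⟩
        simp only [Set.mem_setOf_eq] at hω1 hω2 ⊢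
        have hS : 0 ≤ riemannSum t H X ω := by
          refine Finset.sum_nonneg fun i _ => ?_
          refine mul_nonneg (hH _ _) (sub_nonneg.mpr ?_)
          have h0i : (0:ℝ) ≤ t i.castSucc := ht0 ▸ ht (Fin.zero_le _)
          have h0j : (0:ℝ) ≤ t i.succ := ht0 ▸ ht (Fin.zero_le _)
          exact hω2 h0i h0j (ht i.castSucc_le_succ)
        have : δ ≤ riemannSum t H X ω - Y ω := by linarith
        exact this.trans (le_abs_self _)
      calc μ _ ≤ _ := measure_mono hsub
        _ ≤ ENNReal.ofReal (ε:ℝ) := (hHm n t ht ht0 htl htm).le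
        _ = (ε : ENNReal) := ENNReal.ofReal_coe_nnreal
    refine le_antisymm ?_ (zero_le)
    calc μ {ω | Y ω ≤ -δ} ≤ μ (({ω | Y ω ≤ -δ} ∩ _) ∪ _ᶜ) := measure_mono hsplit
      _ ≤ μ ({ω | Y ω ≤ -δ} ∩ _) + μ _ᶜ := measure_union_le _ _
      _ = 0 := by rw [hinter, hmono, add_zero]
  have hsub : {ω | ¬ 0 ≤ Y ω} ⊆ ⋃ n : ℕ, {ω | Y ω ≤ -(1 / (n + 1 : ℝ))} := by
    intro ω hω
    simp only [Set.mem_setOf_eq, not_le] at hω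
    obtain ⟨n, hn⟩ := exists_nat_one_div_lt (neg_pos.mpr hω)
    refine Set.mem_iUnion.mpr ⟨n, ?_⟩
    simp only [Set.mem_setOf_eq]
    linarith
  refine le_antisymm ?_ (zero_le)
  calc μ {ω | ¬ 0 ≤ Y ω} ≤ μ (⋃ n : ℕ, {ω | Y ω ≤ -(1 / (n + 1 : ℝ))}) := measure_mono hsub
    _ ≤ ∑' n : ℕ, μ {ω | Y ω ≤ -(1 / (n + 1 : ℝ))} := measure_iUnion_le _
    _ = 0 := ENNReal.tsum_eq_zero.mpr fun n => key _ (by positivity)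

end Aux

/-- The decomposition `V_t = u + e^{ξ_t}(z - u + ∫_0^t e^{-ξ_{s-}} d(η-uW)_s)`; if
`η - uW` is a subordinator and `z ≥ u` then `V_t ≥ u`. -/
theorem gou_decomposition {Ω : Type*} [MeasurableSpace Ω] (μ : Measure Ω)
    (ξ η W : ℝ → Ω → ℝ) (hLevy : IsLevyProcess μ fun t ω => (ξ t ω, η t ω))
    (hWLevy : IsLevyProcess μ W)
    (hSDE : ∀ t ≥ (0:ℝ), IsStochInt μ (fun s ω => Real.exp (-ξ s ω)) W t
      (fun ω => Real.exp (-ξ t ω) - 1))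
    (z u : ℝ) (Z Y : ℝ → Ω → ℝ)
    (hZ : ∀ t ≥ (0:ℝ), IsStochInt μ (fun s ω => Real.exp (-ξ s ω)) η t (Z t))
    (hY : ∀ t ≥ (0:ℝ), IsStochInt μ (fun s ω => Real.exp (-ξ s ω))
      (fun r ω => η r ω - u * W r ω) t (Y t))
    (V : ℝ → Ω → ℝ) (hV : ∀ t ω, V t ω = Real.exp (ξ t ω) * (z + Z t ω)) :
    (∀ t ≥ (0:ℝ), ∀ᵐ ω ∂μ, V t ω = u + Real.exp (ξ t ω) * (z - u + Y t ω)) ∧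
      (IsSubordinator μ (fun r ω => η r ω - u * W r ω) → u ≤ z →
        ∀ t ≥ (0:ℝ), ∀ᵐ ω ∂μ, u ≤ V t ω) := by
  have hmain : ∀ t ≥ (0:ℝ), ∀ᵐ ω ∂μ, V t ω = u + Real.exp (ξ t ω) * (z - u + Y t ω) := by
    intro t ht
    have hcomb := isStochInt_sub_smul (hZ t ht) (hSDE t ht) u
    have heq := isStochInt_ae_eq ht (hY t ht) hcomb
    filter_upwards [heq] with ω hω
    rw [hV, hω, Real.exp_neg]
    have hne : Real.exp (ξ t ω) ≠ 0 := Real.exp_ne_zero _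
    field_simp
    ring
  refine ⟨hmain, fun hSub hzu t ht => ?_⟩
  have h0 := isStochInt_nonneg ht (fun s ω => (Real.exp_pos _).le) hSub.2 (hY t ht)
  filter_upwards [h0, hmain t ht] with ω h1 h2
  rw [h2]
  nlinarith [Real.exp_pos (ξ t ω)]
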